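/- Let B be a symmetric positive definite n×n real matrix and q ∈ ℝ^n a nonzero vector with u = q/‖q‖, μ₁ = uᵀBu, μ₂ = uᵀB²u. Then as η → 0⁺, (1 − S(q, (I − ηB)q))/η² converges to (1/2)(μ₂ − μ₁²); that is, the inter-step cosine deviates from 1 at second order in η, with coefficient equal to half the directional variance of B: S(q, (I − ηB)q) = 1 − (1/2)η²(μ₂ − μ₁²) + o(η²). -/

import Mathlib

set_option maxHeartbeats 1000000

open scoped RealInnerProductSpace Topology

theorem inter_step_cosine_second_order
    {n : ℕ} (B : Matrix (Fin n) (Fin n) ℝ) (hB : B.PosDef)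
    (q : EuclideanSpace ℝ (Fin n)) (hq : q ≠ 0) :
    Filter.Tendsto
      (fun η : ℝ =>
        (1 - ⟪q, Matrix.toEuclideanLin ((1 : Matrix (Fin n) (Fin n) ℝ) - η • B) q⟫ /
            (‖q‖ * ‖Matrix.toEuclideanLin ((1 : Matrix (Fin n) (Fin n) ℝ) - η • B) q‖)) / η ^ 2)
      (𝓝[>] 0)
      (𝓝 ((1 / 2) * (⟪‖q‖⁻¹ • q, Matrix.toEuclideanLin (B * B) (‖q‖⁻¹ • q)⟫ -
        ⟪‖q‖⁻¹ • q, Matrix.toEuclideanLin B (‖q‖⁻¹ • q)⟫ ^ 2))) := by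
  set A := Matrix.toEuclideanLin B with hAdef
  have hsymm : A.IsSymmetric := Matrix.isHermitian_iff_isSymmetric.mp hB.isHermitian
  set c := ‖q‖ with hcdef
  have hc0 : 0 < c := norm_pos_iff.mpr hq
  set a : ℝ := ⟪q, A q⟫ with hadef
  set b : ℝ := ⟪A q, A q⟫ with hbdef
  -- rewrite the matrix applications
  have happ : ∀ η : ℝ, Matrix.toEuclideanLin ((1 : Matrix (Fin n) (Fin n) ℝ) - η • B) q
      = q - η • A q := by
    have h1 : Matrix.toEuclideanLin (1 : Matrix (Fin n) (Fin n) ℝ) q = q := by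
      simp [Matrix.toEuclideanLin_apply]
    intro η
    rw [map_sub, map_smul]
    simp only [LinearMap.sub_apply, LinearMap.smul_apply, h1]
    rfl
  have hBB : Matrix.toEuclideanLin (B * B) q = A (A q) := by
    simp [hAdef, Matrix.toEuclideanLin_apply, Matrix.mulVec_mulVec]
  -- target value
  have htarget : (1 / 2 : ℝ) * (⟪c⁻¹ • q, Matrix.toEuclideanLin (B * B) (c⁻¹ • q)⟫ -
      ⟪c⁻¹ • q, Matrix.toEuclideanLin B (c⁻¹ • q)⟫ ^ 2) = (b * c ^ 2 - a ^ 2) / (2 * c ^ 4) := by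
    have h1 : ⟪c⁻¹ • q, Matrix.toEuclideanLin (B * B) (c⁻¹ • q)⟫ = c⁻¹ * (c⁻¹ * b) := by
      rw [map_smul, real_inner_smul_left, real_inner_smul_right, hBB, ← hsymm q (A q)]
    have h2 : ⟪c⁻¹ • q, Matrix.toEuclideanLin B (c⁻¹ • q)⟫ = c⁻¹ * (c⁻¹ * a) := by
      rw [map_smul, real_inner_smul_left, real_inner_smul_right, ← hAdef]
    rw [h1, h2]
    field_simp
  rw [htarget]
  -- key norm identity
  have hN2 : ∀ η : ℝ, ‖q - η • A q‖ ^ 2 = c ^ 2 - 2 * η * a + η ^ 2 * b := by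
    intro η
    have hb' : ‖A q‖ ^ 2 = b := (real_inner_self_eq_norm_sq (A q)).symm
    rw [norm_sub_sq_real, real_inner_smul_right, norm_smul, mul_pow, Real.norm_eq_abs,
      sq_abs, hb']
    ring
  -- eventual positivity
  have hcont : Continuous fun η : ℝ => ‖q - η • A q‖ := by fun_prop
  have hNtend : Filter.Tendsto (fun η : ℝ => ‖q - η • A q‖) (𝓝[>] (0:ℝ)) (𝓝 c) := by
    have := (hcont.tendsto 0).mono_left (nhdsWithin_le_nhds : 𝓝[>] (0:ℝ) ≤ 𝓝 0)
    simpa using this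
  have hNpos : ∀ᶠ η in 𝓝[>] (0:ℝ), 0 < ‖q - η • A q‖ :=
    hNtend.eventually (eventually_gt_nhds hc0)
  have hptend : Filter.Tendsto (fun η : ℝ => c ^ 2 - η * a) (𝓝[>] (0:ℝ)) (𝓝 (c ^ 2)) := by
    have : Continuous fun η : ℝ => c ^ 2 - η * a := by fun_prop
    have := (this.tendsto 0).mono_left (nhdsWithin_le_nhds : 𝓝[>] (0:ℝ) ≤ 𝓝 0)
    simpa using this
  have hppos : ∀ᶠ η in 𝓝[>] (0:ℝ), 0 < c ^ 2 - η * a :=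
    hptend.eventually (eventually_gt_nhds (by positivity))
  -- limit of the simplified function
  have hg : Filter.Tendsto
      (fun η : ℝ => (b * c ^ 2 - a ^ 2) /
        ((c * ‖q - η • A q‖) * (c * ‖q - η • A q‖ + (c ^ 2 - η * a))))
      (𝓝[>] (0:ℝ)) (𝓝 ((b * c ^ 2 - a ^ 2) / (2 * c ^ 4))) := by
    have hden : Filter.Tendsto
        (fun η : ℝ => (c * ‖q - η • A q‖) * (c * ‖q - η • A q‖ + (c ^ 2 - η * a)))
        (𝓝[>] (0:ℝ)) (𝓝 (2 * c ^ 4)) := by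
      have := (hNtend.const_mul c).mul ((hNtend.const_mul c).add hptend)
      convert this using 2
      ring
    exact tendsto_const_nhds.div hden (by positivity)
  refine hg.congr' ?_
  filter_upwards [hNpos, hppos, self_mem_nhdsWithin] with η hN hp (hη : 0 < η)
  set N := ‖q - η • A q‖ with hNdef
  have hDpos : 0 < c * N := by positivity
  have hSpos : 0 < c * N + (c ^ 2 - η * a) := by linarith
  have key : (c * N - (c ^ 2 - η * a)) * (c * N + (c ^ 2 - η * a))
      = η ^ 2 * (b * c ^ 2 - a ^ 2) := by
    have h := hN2 η
    nlinarith [h]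
  have hinner : ⟪q, q - η • A q⟫ = c ^ 2 - η * a := by
    rw [inner_sub_right, real_inner_smul_right, real_inner_self_eq_norm_sq]
  rw [happ η, hinner, ← hNdef]
  rw [div_eq_div_iff (by positivity) (by positivity)]
  have hcn : (1 - (c ^ 2 - η * a) / (c * N)) * (c * N) = c * N - (c ^ 2 - η * a) := by
    field_simp
  nlinarith [key, hDpos, hSpos]
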